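/- arXiv:2311.06098 — 3 statements merged into one kernel-verified Lean document; each statement's English description precedes it below -/
import Mathlib

section
/- Let u, ρ₁, ρ₂ ∈ ℝ, let ρ_up = ρ₁ if u ≥ 0 and ρ_up = ρ₂ if u < 0, and let φ: ℝ → ℝ be twice continuously differentiable and convex. Then u·(φ'(ρ₁)(ρ_up − ρ₁) + φ'(ρ₂)(ρ₂ − ρ_up) + φ(ρ₁) − φ(ρ₂)) ≥ 0. -/
lemma tangent_le (φ : ℝ → ℝ) (hconv : ConvexOn ℝ Set.univ φ)
    (hd : Differentiable ℝ φ) (x y : ℝ) :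
    deriv φ x * (y - x) + φ x ≤ φ y := by
  rcases lt_trichotomy x y with h | rfl | h
  · have := hconv.deriv_le_slope (Set.mem_univ x) (Set.mem_univ y) h (hd x)
    rw [slope_def_field] at this
    have h' : 0 < y - x := by linarith
    rw [le_div_iff₀ h'] at this
    linarith
  · simp
  · have := hconv.slope_le_deriv (Set.mem_univ y) (Set.mem_univ x) h (hd x)
    rw [slope_def_field] at this
    have h' : 0 < x - y := by linarith
    have h2 : φ x - φ y ≤ deriv φ x * (x - y) := by
      rw [div_le_iff₀ h'] at this
      linarith
    linarith

theorem stmt_2 (u ρ₁ ρ₂ : ℝ) (ρup : ℝ)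
    (hup : ρup = if 0 ≤ u then ρ₁ else ρ₂)
    (φ : ℝ → ℝ) (hφ : ContDiff ℝ 2 φ) (hconv : ConvexOn ℝ Set.univ φ) :
    0 ≤ u * (deriv φ ρ₁ * (ρup - ρ₁) + deriv φ ρ₂ * (ρ₂ - ρup) + φ ρ₁ - φ ρ₂) := by
  have hd : Differentiable ℝ φ := hφ.differentiable (by norm_num)
  by_cases hu : 0 ≤ u
  · simp only [hup, if_pos hu]
    have := tangent_le φ hconv hd ρ₂ ρ₁
    nlinarith
  · simp only [hup, if_neg hu]
    have := tangent_le φ hconv hd ρ₁ ρ₂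
    nlinarith [lt_of_not_ge hu]
end

section
/- Let u, ρ₁, ρ₂ ∈ ℝ with ρ_up defined as the upwind value (ρ_up = ρ₁ if u ≥ 0, else ρ_up = ρ₂), and φ twice continuously differentiable and convex. Then there exists ξ between min(ρ₁,ρ₂) and max(ρ₁,ρ₂) such that u·(φ'(ρ₁)(ρ_up − ρ₁) + φ'(ρ₂)(ρ₂ − ρ_up) + φ(ρ₁) − φ(ρ₂)) = (1/2)·φ''(ξ)·|u|·(ρ₁ − ρ₂)². -/
open Set

private lemma deriv2_smooth (φ : ℝ → ℝ) (hφ : ContDiff ℝ 2 φ) :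
    Differentiable ℝ φ ∧ Differentiable ℝ (deriv φ) := by
  have h2 : (2 : WithTop ℕ∞) = 1 + 1 := by norm_num
  have hφ1 : ContDiff ℝ 1 (deriv φ) := by
    have := (contDiff_succ_iff_deriv.mp (h2 ▸ hφ)).2.2
    simpa using this
  exact ⟨hφ.differentiable (by norm_num), hφ1.differentiable (by norm_num)⟩

/-- Second order Taylor with Lagrange remainder, expansion at the left endpoint. -/
lemma taylor2_left (φ : ℝ → ℝ) (hφ : ContDiff ℝ 2 φ) {a b : ℝ} (hab : a < b) :
    ∃ ξ ∈ Set.Ioo a b,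
      φ b - φ a - deriv φ a * (b - a) = deriv (deriv φ) ξ * (b - a) ^ 2 / 2 := by
  obtain ⟨hdφ, hdφ'⟩ := deriv2_smooth φ hφ
  set K : ℝ := (φ b - φ a - deriv φ a * (b - a)) / (b - a) ^ 2 with hK
  set g : ℝ → ℝ := fun t => φ b - φ t - deriv φ t * (b - t) - K * (b - t) ^ 2 with hg
  have hba : (b - a) ≠ 0 := sub_ne_zero.mpr hab.ne'
  have hga : g a = 0 := by simp only [hg, hK]; field_simp; ring
  have hgb : g b = 0 := by simp [hg]
  have hgd : ∀ t : ℝ, HasDerivAt g ((2 * K - deriv (deriv φ) t) * (b - t)) t := by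
    intro t
    have h1 : HasDerivAt φ (deriv φ t) t := (hdφ t).hasDerivAt
    have h2' : HasDerivAt (deriv φ) (deriv (deriv φ) t) t := (hdφ' t).hasDerivAt
    have h3 : HasDerivAt (fun t : ℝ => b - t) (-1) t := by
      simpa using (hasDerivAt_id t).const_sub b
    have h4 : HasDerivAt (fun t => deriv φ t * (b - t))
        (deriv (deriv φ) t * (b - t) + deriv φ t * (-1)) t := h2'.mul h3
    have h5 : HasDerivAt (fun t : ℝ => K * (b - t) ^ 2) (K * (2 * (b - t) ^ 1 * (-1))) t :=
      (h3.pow 2).const_mul K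
    have := ((h1.const_sub (φ b)).sub h4).sub h5
    exact this.congr_deriv (by ring)
  have hgc : ContinuousOn g (Icc a b) :=
    fun t _ => (hgd t).continuousAt.continuousWithinAt
  obtain ⟨c, hc, hc0⟩ := exists_deriv_eq_zero hab hgc (hga.trans hgb.symm)
  refine ⟨c, hc, ?_⟩
  rw [(hgd c).deriv] at hc0
  have hbc : (b - c) ≠ 0 := sub_ne_zero.mpr hc.2.ne'
  have h2K : 2 * K = deriv (deriv φ) c := by
    rcases mul_eq_zero.mp hc0 with h | h
    · linarith [sub_eq_zero.mp h]
    · exact absurd h hbc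
  have hKeq : φ b - φ a - deriv φ a * (b - a) = K * (b - a) ^ 2 := by
    field_simp [hK]
    rw [hK]; field_simp
  rw [hKeq, ← h2K]; ring

/-- Second order Taylor with Lagrange remainder, expansion at the right endpoint. -/
lemma taylor2_right (φ : ℝ → ℝ) (hφ : ContDiff ℝ 2 φ) {a b : ℝ} (hab : a < b) :
    ∃ ξ ∈ Set.Ioo a b,
      φ a - φ b - deriv φ b * (a - b) = deriv (deriv φ) ξ * (a - b) ^ 2 / 2 := by
  obtain ⟨hdφ, hdφ'⟩ := deriv2_smooth φ hφ
  set K : ℝ := (φ a - φ b - deriv φ b * (a - b)) / (a - b) ^ 2 with hK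
  set g : ℝ → ℝ := fun t => φ a - φ t - deriv φ t * (a - t) - K * (a - t) ^ 2 with hg
  have hba : (a - b) ≠ 0 := sub_ne_zero.mpr hab.ne
  have hga : g a = 0 := by simp [hg]
  have hgb : g b = 0 := by simp only [hg, hK]; field_simp; ring
  have hgd : ∀ t : ℝ, HasDerivAt g ((2 * K - deriv (deriv φ) t) * (a - t)) t := by
    intro t
    have h1 : HasDerivAt φ (deriv φ t) t := (hdφ t).hasDerivAt
    have h2' : HasDerivAt (deriv φ) (deriv (deriv φ) t) t := (hdφ' t).hasDerivAt
    have h3 : HasDerivAt (fun t : ℝ => a - t) (-1) t := by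
      simpa using (hasDerivAt_id t).const_sub a
    have h4 : HasDerivAt (fun t => deriv φ t * (a - t))
        (deriv (deriv φ) t * (a - t) + deriv φ t * (-1)) t := h2'.mul h3
    have h5 : HasDerivAt (fun t : ℝ => K * (a - t) ^ 2) (K * (2 * (a - t) ^ 1 * (-1))) t :=
      (h3.pow 2).const_mul K
    have := ((h1.const_sub (φ a)).sub h4).sub h5
    exact this.congr_deriv (by ring)
  have hgc : ContinuousOn g (Icc a b) :=
    fun t _ => (hgd t).continuousAt.continuousWithinAt
  obtain ⟨c, hc, hc0⟩ := exists_deriv_eq_zero hab hgc (hga.trans hgb.symm)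
  refine ⟨c, hc, ?_⟩
  rw [(hgd c).deriv] at hc0
  have hac : (a - c) ≠ 0 := sub_ne_zero.mpr hc.1.ne
  have h2K : 2 * K = deriv (deriv φ) c := by
    rcases mul_eq_zero.mp hc0 with h | h
    · linarith [sub_eq_zero.mp h]
    · exact absurd h hac
  have hKeq : φ a - φ b - deriv φ b * (a - b) = K * (a - b) ^ 2 := by
    field_simp [hK]
    rw [hK]; field_simp
  rw [hKeq, ← h2K]; ring

theorem stmt_3 (u ρ₁ ρ₂ : ℝ) (ρup : ℝ)
    (hup : ρup = if 0 ≤ u then ρ₁ else ρ₂)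
    (φ : ℝ → ℝ) (hφ : ContDiff ℝ 2 φ) (hconv : ConvexOn ℝ Set.univ φ) :
    ∃ ξ ∈ Set.Icc (min ρ₁ ρ₂) (max ρ₁ ρ₂),
      u * (deriv φ ρ₁ * (ρup - ρ₁) + deriv φ ρ₂ * (ρ₂ - ρup) + φ ρ₁ - φ ρ₂)
        = (1/2) * deriv (deriv φ) ξ * |u| * (ρ₁ - ρ₂)^2 := by
  rcases eq_or_ne ρ₁ ρ₂ with heq | hne
  · refine ⟨ρ₁, ⟨min_le_left _ _, le_max_left _ _⟩, ?_⟩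
    subst heq
    rcases le_or_gt 0 u with h | h <;> simp [hup, h] <;> ring
  rcases le_or_gt 0 u with hu | hu
  · -- ρup = ρ₁, |u| = u; expansion at ρ₂
    have hupv : ρup = ρ₁ := by simp [hup, hu]
    have habs : |u| = u := abs_of_nonneg hu
    rcases lt_or_gt_of_ne hne with h12 | h12
    · obtain ⟨ξ, hξ, he⟩ := taylor2_right φ hφ h12
      refine ⟨ξ, ⟨(min_le_left _ _).trans hξ.1.le, hξ.2.le.trans (le_max_right _ _)⟩, ?_⟩
      rw [hupv, habs]
      linear_combination u * he
    · obtain ⟨ξ, hξ, he⟩ := taylor2_left φ hφ h12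
      refine ⟨ξ, ⟨(min_le_right _ _).trans hξ.1.le, hξ.2.le.trans (le_max_left _ _)⟩, ?_⟩
      rw [hupv, habs]
      linear_combination u * he
  · -- ρup = ρ₂, |u| = -u; expansion at ρ₁
    have hupv : ρup = ρ₂ := by simp [hup, not_le.mpr hu]
    have habs : |u| = -u := abs_of_neg hu
    rcases lt_or_gt_of_ne hne with h12 | h12
    · obtain ⟨ξ, hξ, he⟩ := taylor2_left φ hφ h12
      refine ⟨ξ, ⟨(min_le_left _ _).trans hξ.1.le, hξ.2.le.trans (le_max_right _ _)⟩, ?_⟩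
      rw [hupv, habs]
      linear_combination (-u) * he
    · obtain ⟨ξ, hξ, he⟩ := taylor2_right φ hφ h12
      refine ⟨ξ, ⟨(min_le_right _ _).trans hξ.1.le, hξ.2.le.trans (le_max_left _ _)⟩, ?_⟩
      rw [hupv, habs]
      linear_combination (-u) * he
end

section
/- Let A be an n×n real matrix that is weakly diagonally dominant with nonnegative diagonal entries, nonpositive off-diagonal entries, and zero row sums. Then for any τ > 0 and any diagonal matrix D with positive diagonal entries, A + τ⁻¹·D is invertible and its inverse has all nonnegative entries. -/
theorem stmt_12 (n : ℕ) (A : Matrix (Fin n) (Fin n) ℝ)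
    (hdiag : ∀ i, 0 ≤ A i i)
    (hoff : ∀ i j, i ≠ j → A i j ≤ 0)
    (hdom : ∀ i, ∑ j, |A i j| ≤ 2 * A i i)
    (hrow : ∀ i, ∑ j, A i j = 0)
    (τ : ℝ) (hτ : 0 < τ)
    (D : Matrix (Fin n) (Fin n) ℝ)
    (hD : ∀ i j, i ≠ j → D i j = 0) (hDpos : ∀ i, 0 < D i i) :
    IsUnit (A + τ⁻¹ • D) ∧ ∀ i j, 0 ≤ (A + τ⁻¹ • D)⁻¹ i j := by
  set M := A + τ⁻¹ • D with hM
  have hMentry : ∀ i k, M i k = A i k + τ⁻¹ * D i k := by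
    intro i k; simp [hM, Matrix.add_apply, Matrix.smul_apply, smul_eq_mul]
  have hMoff : ∀ i k, i ≠ k → M i k ≤ 0 := by
    intro i k h
    rw [hMentry, hD i k h]
    simpa using hoff i k h
  have hDsum : ∀ i, ∑ k, D i k = D i i := by
    intro i
    exact Finset.sum_eq_single i (fun k _ hk => hD i k (Ne.symm hk)) (by simp)
  have hMrow : ∀ i, ∑ k, M i k = τ⁻¹ * D i i := by
    intro i
    have : ∑ k, M i k = ∑ k, A i k + τ⁻¹ * ∑ k, D i k := by
      simp only [hMentry, Finset.sum_add_distrib, Finset.mul_sum]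
    rw [this, hrow i, hDsum i, zero_add]
  have key : ∀ x : Fin n → ℝ, (∀ i, 0 ≤ M.mulVec x i) → ∀ i, 0 ≤ x i := by
    intro x hx i
    by_contra hneg
    push_neg at hneg
    obtain ⟨i₀, -, hmin⟩ := Finset.exists_min_image Finset.univ x ⟨i, Finset.mem_univ i⟩
    have hi₀ : x i₀ < 0 := lt_of_le_of_lt (hmin i (Finset.mem_univ i)) hneg
    have hle : M.mulVec x i₀ ≤ (∑ k, M i₀ k) * x i₀ := by
      rw [Matrix.mulVec, dotProduct, Finset.sum_mul]
      apply Finset.sum_le_sum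
      intro k _
      rcases eq_or_ne i₀ k with rfl | h
      · exact le_refl _
      · exact mul_le_mul_of_nonpos_left (hmin k (Finset.mem_univ k)) (hMoff i₀ k h)
    rw [hMrow i₀] at hle
    have hpos : 0 < τ⁻¹ * D i₀ i₀ := mul_pos (inv_pos.mpr hτ) (hDpos i₀)
    nlinarith [hx i₀]
  have hdet : M.det ≠ 0 := by
    intro h
    obtain ⟨v, hv, hMv⟩ := (Matrix.exists_mulVec_eq_zero_iff).mpr h
    have h1 := key v (by intro i; rw [hMv]; simp)
    have h2 := key (-v) (by intro i; rw [Matrix.mulVec_neg, hMv]; simp)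
    apply hv
    funext i
    have := h2 i
    simp only [Pi.neg_apply, Pi.zero_apply] at this ⊢
    linarith [h1 i]
  have hunit : IsUnit M := (Matrix.isUnit_iff_isUnit_det M).mpr (isUnit_iff_ne_zero.mpr hdet)
  refine ⟨hunit, fun i j => ?_⟩
  have hinv : M * M⁻¹ = 1 := Matrix.mul_nonsing_inv M (isUnit_iff_ne_zero.mpr hdet)
  have := key (fun k => M⁻¹ k j) (by
    intro i'
    have : M.mulVec (fun k => M⁻¹ k j) i' = (M * M⁻¹) i' j := by
      simp [Matrix.mulVec, dotProduct, Matrix.mul_apply]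
    rw [this, hinv, Matrix.one_apply]
    split <;> norm_num)
  exact this i
end
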